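/- arXiv:1804.00517 — 4 statements merged into one kernel-verified Lean document; each statement's English description precedes it below -/
import Mathlib

section
/- If positive integers (p, n) with p ≤ n satisfy 3p² − 6np + n(2n−1) = 0, then the pair (p', n') = (8n − 5p + 1, 19n − 12p + 3) also satisfies 3p'² − 6n'p' + n'(2n'−1) = 0. -/
/-- The recursion preserves solutions of 3p² − 6np + n(2n−1) = 0. -/
theorem stmt_1 (p n : ℤ) (hp : 0 < p) (hn : 0 < n) (hpn : p ≤ n)
    (heq : 3 * p ^ 2 - 6 * n * p + n * (2 * n - 1) = 0) :
    3 * (8 * n - 5 * p + 1) ^ 2 - 6 * (19 * n - 12 * p + 3) * (8 * n - 5 * p + 1)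
      + (19 * n - 12 * p + 3) * (2 * (19 * n - 12 * p + 3) - 1) = 0 := by nlinarith [heq, sq_nonneg (p - n)]
end

section
/- The Diophantine equation 3p² − 6np + n(2n−1) = 0 has infinitely many solutions in positive integers (p, n) with p ≤ n. -/
def seq3 : ℕ → ℤ × ℤ
  | 0 => (1, 3)
  | k + 1 =>
    let q := seq3 k
    (8 * q.2 - 5 * q.1 + 1, 19 * q.2 - 12 * q.1 + 3)

lemma seq3_inv (k : ℕ) :
    0 < (seq3 k).1 ∧ 0 < (seq3 k).2 ∧ (seq3 k).1 ≤ (seq3 k).2 ∧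
      3 * (seq3 k).1 ^ 2 - 6 * (seq3 k).2 * (seq3 k).1 +
        (seq3 k).2 * (2 * (seq3 k).2 - 1) = 0 := by
  induction k with
  | zero => norm_num [seq3]
  | succ k ih =>
    obtain ⟨h1, h2, h3, h4⟩ := ih
    refine ⟨by simp only [seq3]; omega, by simp only [seq3]; omega,
      by simp only [seq3]; omega, ?_⟩
    simp only [seq3]
    nlinarith [h4]

lemma seq3_snd_mono : StrictMono fun k => (seq3 k).2 := by
  apply strictMono_nat_of_lt_succ
  intro k
  obtain ⟨h1, h2, h3, h4⟩ := seq3_inv k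
  simp only [seq3]
  omega

/-- The equation 3p² − 6np + n(2n−1) = 0 has infinitely many positive
integer solutions with p ≤ n. -/
theorem stmt_3 :
    {q : ℤ × ℤ | 0 < q.1 ∧ 0 < q.2 ∧ q.1 ≤ q.2 ∧
      3 * q.1 ^ 2 - 6 * q.2 * q.1 + q.2 * (2 * q.2 - 1) = 0}.Infinite := by
  refine Set.infinite_of_injective_forall_mem (f := seq3) ?_ seq3_inv
  intro a b hab
  exact seq3_snd_mono.injective (congrArg Prod.snd hab)
end

section
/- For integers n ≥ 2 and p with 2 ≤ p ≤ 2n − 2, define λ₁ = (1/180)C(2n,p) − (1/12)C(2n−2,p−1) + (1/2)C(2n−4,p−2), λ₂ = −(1/180)C(2n,p) + (1/2)C(2n−2,p−1) − 2C(2n−4,p−2), λ₃ = (1/72)C(2n,p) − (1/6)C(2n−2,p−1) + (1/2)C(2n−4,p−2). Then ((4n+2)/((n+1)(n+2)))·λ₁ + (1/2)·λ₂ + λ₃ > 0. -/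
private lemma patodi_aux1 (N : ℚ) (hN : 3 ≤ N) :
    0 < (4*N^2+20*N+12)*(2*N-3)*(2*N-2)*(2*N-1)*(2*N)
      + 30*N*(N-1)*(2*N-3)*(2*N-2)*((2*N-3)+2*N-1)
      - 180*N*(N-1)*(2*N-3)*((2*N-3)+2*N-1) := by
  have hs : 0 ≤ N - 3 := by linarith
  nlinarith [pow_nonneg hs 2, pow_nonneg hs 3, pow_nonneg hs 4, pow_nonneg hs 5]

private lemma patodi_aux2 (N : ℚ) (hN : 3 ≤ N) :
    0 < (4*N^2+20*N+12)*(2*N-3)*(2*N-2)*(2*N-1)*(2*N)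
      + 30*N*(N-1)*(2*N-3)*(2*N-2)*((N-1)^2+2*N-1)
      - 180*N*(N-1)*(N-1)^2*((N-1)^2+2*N-1) := by
  have hs : 0 ≤ N - 3 := by linarith
  nlinarith [pow_nonneg hs 2, pow_nonneg hs 3, pow_nonneg hs 4, pow_nonneg hs 5,
    pow_nonneg hs 6]

private lemma patodi_bracket (N u : ℚ) (hN : 3 ≤ N) (h1 : 2*N-3 ≤ u) (h2 : u ≤ (N-1)^2) :
    0 < (4*N^2+20*N+12)*(2*N-3)*(2*N-2)*(2*N-1)*(2*N)
      + 30*N*(N-1)*(2*N-3)*(2*N-2)*(u+2*N-1) - 180*N*(N-1)*u*(u+2*N-1) := by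
  have hg1 := patodi_aux1 N hN
  have hg2 := patodi_aux2 N hN
  have hsq : (1:ℚ) ≤ (N-2)^2 := by nlinarith
  have ha : 0 ≤ (N-1)^2 - u := by linarith
  have hb : 0 ≤ u - (2*N-3) := by linarith
  have hNn : (0:ℚ) ≤ N * (N-1) := by nlinarith
  have cert : ((4*N^2+20*N+12)*(2*N-3)*(2*N-2)*(2*N-1)*(2*N)
        + 30*N*(N-1)*(2*N-3)*(2*N-2)*(u+2*N-1)
        - 180*N*(N-1)*u*(u+2*N-1)) * (N-2)^2
      = ((4*N^2+20*N+12)*(2*N-3)*(2*N-2)*(2*N-1)*(2*N)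
          + 30*N*(N-1)*(2*N-3)*(2*N-2)*((2*N-3)+2*N-1)
          - 180*N*(N-1)*(2*N-3)*((2*N-3)+2*N-1)) * ((N-1)^2 - u)
        + ((4*N^2+20*N+12)*(2*N-3)*(2*N-2)*(2*N-1)*(2*N)
          + 30*N*(N-1)*(2*N-3)*(2*N-2)*((N-1)^2+2*N-1)
          - 180*N*(N-1)*(N-1)^2*((N-1)^2+2*N-1)) * (u - (2*N-3))
        + 180*(N*(N-1))*(u - (2*N-3))*((N-1)^2 - u)*(N-2)^2 := by ring
  have hT3 : 0 ≤ 180*(N*(N-1))*(u - (2*N-3))*((N-1)^2 - u)*(N-2)^2 := by positivity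
  have key : 0 < ((4*N^2+20*N+12)*(2*N-3)*(2*N-2)*(2*N-1)*(2*N)
          + 30*N*(N-1)*(2*N-3)*(2*N-2)*((2*N-3)+2*N-1)
          - 180*N*(N-1)*(2*N-3)*((2*N-3)+2*N-1)) * ((N-1)^2 - u)
        + ((4*N^2+20*N+12)*(2*N-3)*(2*N-2)*(2*N-1)*(2*N)
          + 30*N*(N-1)*(2*N-3)*(2*N-2)*((N-1)^2+2*N-1)
          - 180*N*(N-1)*(N-1)^2*((N-1)^2+2*N-1)) * (u - (2*N-3)) := by
    rcases le_total (2*u) ((2*N-3) + (N-1)^2) with h | h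
    · have h' : 0 ≤ (N-1)^2 - u - 1/2 := by nlinarith
      nlinarith [mul_nonneg hg1.le h', mul_nonneg hg2.le hb]
    · have h' : 0 ≤ u - (2*N-3) - 1/2 := by nlinarith
      nlinarith [mul_nonneg hg2.le h', mul_nonneg hg1.le ha]
  by_contra hcon
  push_neg at hcon
  have := mul_nonpos_of_nonpos_of_nonneg hcon (sq_nonneg (N-2))
  rw [cert] at this
  linarith

set_option maxHeartbeats 1600000 in
/-- Positivity of the key combination of Patodi's coefficients
for 2 ≤ p ≤ 2n − 2. -/
theorem stmt_11 (n p : ℕ) (hn : 2 ≤ n) (hp : 2 ≤ p) (hp2 : p ≤ 2 * n - 2) :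
    ((4 * n + 2 : ℚ) / ((n + 1) * (n + 2))) *
        ((1 / 180 : ℚ) * ((2 * n).choose p) - (1 / 12) * ((2 * n - 2).choose (p - 1))
          + (1 / 2) * ((2 * n - 4).choose (p - 2)))
      + (1 / 2) *
        (-(1 / 180 : ℚ) * ((2 * n).choose p) + (1 / 2) * ((2 * n - 2).choose (p - 1))
          - 2 * ((2 * n - 4).choose (p - 2)))
      + ((1 / 72 : ℚ) * ((2 * n).choose p) - (1 / 6) * ((2 * n - 2).choose (p - 1))
          + (1 / 2) * ((2 * n - 4).choose (p - 2))) > 0 := by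
  rcases eq_or_lt_of_le hn with h2 | h3
  · -- n = 2, hence p = 2
    have hn2 : n = 2 := h2.symm
    have hp2' : p = 2 := by omega
    subst hn2; subst hp2'
    rw [show Nat.choose 4 2 = 6 from rfl]; norm_num
  -- main case n ≥ 3
  obtain ⟨k, rfl⟩ : ∃ k, p = k + 2 := ⟨p - 2, by omega⟩
  obtain ⟨j, hj⟩ : ∃ j, 2 * n = k + j + 4 := ⟨2 * n - 4 - k, by omega⟩
  rw [show 2 * n - 2 = k + j + 2 by omega, show 2 * n - 4 = k + j by omega, hj,
    show k + 2 - 1 = k + 1 from rfl, show k + 2 - 2 = k from rfl]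
  -- names for the three binomial coefficients, in ℚ
  have hn3 : 3 ≤ n := h3
  have hN2' : (2:ℚ) * (n:ℚ) = (k:ℚ) + (j:ℚ) + 4 := by exact_mod_cast congrArg (Nat.cast : ℕ → ℚ) hj
  have hN3' : (3:ℚ) ≤ (n:ℚ) := by exact_mod_cast hn3
  have q1 : ((k:ℚ) + (j:ℚ) + 1) * ((k + j).choose k : ℚ)
      = ((k + j + 1).choose (k + 1) : ℚ) * ((k:ℚ) + 1) := by
    have := Nat.add_one_mul_choose_eq (k + j) k
    exact_mod_cast this
  have q2 : ((k + j + 1).choose (k + 1) : ℚ) * ((k:ℚ) + (j:ℚ) + 2)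
      = ((k + j + 2).choose (k + 1) : ℚ) * ((j:ℚ) + 1) := by
    have h := Nat.choose_mul_succ_eq (k + j + 1) (k + 1)
    rw [show k + j + 1 + 1 = k + j + 2 by ring, show k + j + 2 - (k + 1) = j + 1 by omega] at h
    exact_mod_cast h
  have q4 : ((k:ℚ) + (j:ℚ) + 3) * ((k + j + 2).choose (k + 1) : ℚ)
      = ((k + j + 3).choose (k + 2) : ℚ) * ((k:ℚ) + 2) := by
    have := Nat.add_one_mul_choose_eq (k + j + 2) (k + 1)
    exact_mod_cast this
  have q5 : ((k + j + 3).choose (k + 2) : ℚ) * ((k:ℚ) + (j:ℚ) + 4)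
      = ((k + j + 4).choose (k + 2) : ℚ) * ((j:ℚ) + 2) := by
    have h := Nat.choose_mul_succ_eq (k + j + 3) (k + 2)
    rw [show k + j + 3 + 1 = k + j + 4 by ring, show k + j + 4 - (k + 2) = j + 2 by omega] at h
    exact_mod_cast h
  set a : ℚ := ((k + j + 4).choose (k + 2) : ℚ) with ha
  set b : ℚ := ((k + j + 2).choose (k + 1) : ℚ) with hb
  set c : ℚ := ((k + j).choose k : ℚ) with hc
  set N : ℚ := (n : ℚ) with hNdef
  set K : ℚ := (k : ℚ) with hKdef
  set J : ℚ := (j : ℚ) with hJdef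
  have hN2 : 2 * N = K + J + 4 := hN2'
  have hN3 : (3 : ℚ) ≤ N := hN3'
  have hK0 : (0 : ℚ) ≤ K := by rw [hKdef]; positivity
  have hJ0 : (0 : ℚ) ≤ J := by rw [hJdef]; positivity
  have hBq : b * ((K + 1) * (J + 1)) = (K + J + 1) * (K + J + 2) * c := by
    linear_combination -((K + 1) * q2) - (K + J + 2) * q1
  have hAq : a * ((K + 2) * (J + 2)) = (K + J + 3) * (K + J + 4) * b := by
    linear_combination -((K + 2) * q5) - (K + J + 4) * q4
  have hA2 : a * ((K + 1) * (K + 2) * (J + 1) * (J + 2))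
      = (K + J + 1) * (K + J + 2) * (K + J + 3) * (K + J + 4) * c := by
    linear_combination ((K + 1) * (J + 1)) * hAq + (K + J + 3) * (K + J + 4) * hBq
  have hc1 : (1 : ℚ) ≤ c := by
    have h := Nat.choose_pos (Nat.le_add_right k j)
    rw [hc]; exact_mod_cast h
  -- bounds on u = (K+1)*(J+1)
  have hu1 : 2*N - 3 ≤ (K+1)*(J+1) := by nlinarith [mul_nonneg hK0 hJ0]
  have hu2 : (K+1)*(J+1) ≤ (N-1)^2 := by nlinarith [sq_nonneg (K-J)]
  have hbr := patodi_bracket N ((K+1)*(J+1)) hN3 hu1 hu2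
  have hbu1 : (K+2)*(J+2) = (K+1)*(J+1) + 2*N - 1 := by linear_combination -hN2
  have hM1 : K + J + 1 = 2*N - 3 := by linarith
  have hM2 : K + J + 2 = 2*N - 2 := by linarith
  have hM3 : K + J + 3 = 2*N - 1 := by linarith
  have hM4 : K + J + 4 = 2*N := by linarith
  have hDpos : (0:ℚ) < (K+1)*(K+2)*(J+1)*(J+2) :=
    mul_pos (mul_pos (mul_pos (by linarith) (by linarith)) (by linarith)) (by linarith)
  have hlinD : ((4*N^2+20*N+12) * a + 30*N*(N-1) * b - 180*N*(N-1) * c)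
        * ((K+1)*(K+2)*(J+1)*(J+2))
      = ((4*N^2+20*N+12)*(K+J+1)*(K+J+2)*(K+J+3)*(K+J+4)
        + 30*N*(N-1)*(K+J+1)*(K+J+2)*((K+2)*(J+2))
        - 180*N*(N-1)*((K+1)*(J+1))*((K+2)*(J+2))) * c := by
    linear_combination (4*N^2+20*N+12) * hA2 + 30*N*(N-1)*(K+2)*(J+2) * hBq
  rw [hbu1, hM1, hM2, hM3, hM4] at hlinD
  have hlin : 0 < (4*N^2+20*N+12) * a + 30*N*(N-1) * b - 180*N*(N-1) * c := by
    by_contra h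
    push_neg at h
    have h1 : ((4*N^2+20*N+12) * a + 30*N*(N-1) * b - 180*N*(N-1) * c)
        * ((K+1)*(K+2)*(J+1)*(J+2)) ≤ 0 := mul_nonpos_of_nonpos_of_nonneg h hDpos.le
    have h2 := mul_pos hbr (show (0:ℚ) < c by linarith)
    rw [hlinD] at h1
    linarith
  -- conclude
  have hEpos : (0:ℚ) < 360 * ((N+1)*(N+2)) := by positivity
  have hne : ((N+1)*(N+2)) ≠ 0 := by positivity
  set T := ((4 * N + 2) / ((N + 1) * (N + 2))) * ((1/180) * a - (1/12) * b + (1/2) * c)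
      + (1/2) * (-(1/180) * a + (1/2) * b - 2 * c)
      + ((1/72) * a - (1/6) * b + (1/2) * c) with hT
  show 0 < T
  have hT360 : T * (360 * ((N+1)*(N+2)))
      = (4*N^2+20*N+12) * a + 30*N*(N-1) * b - 180*N*(N-1) * c := by
    rw [hT]
    field_simp
    ring
  by_contra h
  push_neg at h
  have := mul_nonpos_of_nonpos_of_nonneg h hEpos.le
  rw [hT360] at this
  linarith
end

section
/- For real p with 2 ≤ p ≤ 2n − 2 and integer n ≥ 2, the real-variable extension of the positivity statement holds: with λ₁, λ₂, λ₃ defined by the same formulas using generalized binomial-type polynomial expressions in p, the combination ((4n+2)/((n+1)(n+2)))·λ₁ + (1/2)·λ₂ + λ₃ is strictly positive. -/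
/-- The binomial coefficient C(m, p) for real p, interpreted via
Γ-function ratios: C(m, p) = m! / (Γ(p+1) Γ(m−p+1)). -/
noncomputable def realBinom (m : ℕ) (p : ℝ) : ℝ :=
  (Nat.factorial m : ℝ) / (Real.Gamma (p + 1) * Real.Gamma ((m : ℝ) - p + 1))

lemma tu_aux (M u : ℝ) (hM : 0 ≤ M) (hu1 : 2*M+1 ≤ u) (hu2 : u ≤ (M+1)^2) :
    0 < (4*M+10) * ((1/180)*((2*M+4)*(2*M+3)*(2*M+2)*(2*M+1))
          - (1/12)*((2*M+2)*(2*M+1)*(u+2*M+3)) + (1/2)*(u*(u+2*M+3)))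
      + (M+3)*(M+4) * ((1/90)*((2*M+4)*(2*M+3)*(2*M+2)*(2*M+1))
          + (1/12)*((2*M+2)*(2*M+1)*(u+2*M+3)) - (1/2)*(u*(u+2*M+3))) := by
  nlinarith [mul_nonneg (sub_nonneg.2 hu1) (sub_nonneg.2 hu2), mul_nonneg (mul_nonneg hM hM) hM,
    mul_nonneg (mul_nonneg (sub_nonneg.2 hu1) (sub_nonneg.2 hu2)) hM,
    mul_nonneg (mul_nonneg (mul_nonneg (sub_nonneg.2 hu1) (sub_nonneg.2 hu2)) hM) hM,
    sq_nonneg (u - 2*M-1), mul_nonneg hM (sub_nonneg.2 hu2), mul_nonneg hM (sub_nonneg.2 hu1)]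

lemma q_aux (M x y : ℝ) (hM : 0 ≤ M) (hx : 1 ≤ x) (hy : 1 ≤ y) (hxy : x + y = 2*M+2) :
    0 < (4*M+10) * ((1/180)*((2*M+4)*(2*M+3)*(2*M+2)*(2*M+1))
          - (1/12)*((2*M+2)*(2*M+1)*((x+1)*(y+1))) + (1/2)*((x+1)*x*((y+1)*y)))
      + (M+3)*(M+4) * ((1/90)*((2*M+4)*(2*M+3)*(2*M+2)*(2*M+1))
          + (1/12)*((2*M+2)*(2*M+1)*((x+1)*(y+1))) - (1/2)*((x+1)*x*((y+1)*y))) := by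
  have hy2 : y = 2*M+2 - x := by linarith
  subst hy2
  have h := tu_aux M (x*(2*M+2-x)) hM (by nlinarith) (by nlinarith [sq_nonneg (M+1-x)])
  nlinarith [h]

set_option maxHeartbeats 800000 in
lemma S_pos (M p : ℝ) (hM : 0 ≤ M) (hp : 2 ≤ p) (hp2 : p ≤ 2*M+2) :
    0 < (4*(M+2)+2)/((M+2+1)*(M+2+2)) *
          ((1/180)*((2*M+4)*(2*M+3)*(2*M+2)*(2*M+1)/(p*(p-1)*(2*M+4-p)*(2*M+3-p)))
            - (1/12)*((2*M+2)*(2*M+1)/((p-1)*(2*M+3-p))) + (1/2)*1)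
      + (1/2) *
          (-(1/180)*((2*M+4)*(2*M+3)*(2*M+2)*(2*M+1)/(p*(p-1)*(2*M+4-p)*(2*M+3-p)))
            + (1/2)*((2*M+2)*(2*M+1)/((p-1)*(2*M+3-p))) - 2*1)
      + ((1/72)*((2*M+4)*(2*M+3)*(2*M+2)*(2*M+1)/(p*(p-1)*(2*M+4-p)*(2*M+3-p)))
            - (1/6)*((2*M+2)*(2*M+1)/((p-1)*(2*M+3-p))) + (1/2)*1) := by
  have h1 : (0:ℝ) < p := by linarith
  have h2 : (0:ℝ) < p - 1 := by linarith
  have h3 : (0:ℝ) < 2 * M + 4 - p := by linarith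
  have h4 : (0:ℝ) < 2 * M + 3 - p := by linarith
  have h5 : (0:ℝ) < M + 3 := by linarith
  have h6 : (0:ℝ) < M + 4 := by linarith
  have hQ := q_aux M (p - 1) (2*M + 3 - p) hM (by linarith) (by linarith) (by ring)
  have hD : (0:ℝ) < p*(p-1)*(2*M+4-p)*(2*M+3-p)*((M+3)*(M+4)) := by positivity
  have key : (4*(M+2)+2)/((M+2+1)*(M+2+2)) *
          ((1/180)*((2*M+4)*(2*M+3)*(2*M+2)*(2*M+1)/(p*(p-1)*(2*M+4-p)*(2*M+3-p)))
            - (1/12)*((2*M+2)*(2*M+1)/((p-1)*(2*M+3-p))) + (1/2)*1)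
      + (1/2) *
          (-(1/180)*((2*M+4)*(2*M+3)*(2*M+2)*(2*M+1)/(p*(p-1)*(2*M+4-p)*(2*M+3-p)))
            + (1/2)*((2*M+2)*(2*M+1)/((p-1)*(2*M+3-p))) - 2*1)
      + ((1/72)*((2*M+4)*(2*M+3)*(2*M+2)*(2*M+1)/(p*(p-1)*(2*M+4-p)*(2*M+3-p)))
            - (1/6)*((2*M+2)*(2*M+1)/((p-1)*(2*M+3-p))) + (1/2)*1)
      = ((4*M+10) * ((1/180)*((2*M+4)*(2*M+3)*(2*M+2)*(2*M+1))
          - (1/12)*((2*M+2)*(2*M+1)*((p-1+1)*((2*M+3-p)+1)))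
          + (1/2)*((p-1+1)*(p-1)*(((2*M+3-p)+1)*(2*M+3-p))))
        + (M+3)*(M+4) * ((1/90)*((2*M+4)*(2*M+3)*(2*M+2)*(2*M+1))
          + (1/12)*((2*M+2)*(2*M+1)*((p-1+1)*((2*M+3-p)+1)))
          - (1/2)*((p-1+1)*(p-1)*(((2*M+3-p)+1)*(2*M+3-p)))))
        / (p*(p-1)*(2*M+4-p)*(2*M+3-p)*((M+3)*(M+4))) := by
    field_simp [show M*2+4-p ≠ 0 from ne_of_gt (by linarith), show M*2+3-p ≠ 0 from ne_of_gt (by linarith)]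
    ring
  rw [key]
  exact div_pos hQ hD


set_option maxHeartbeats 1600000 in
/-- Positivity of the combination of Patodi's coefficients for real
p ∈ [2, 2n−2]. -/
theorem stmt_17 (n : ℕ) (hn : 2 ≤ n) (p : ℝ) (hp : 2 ≤ p) (hp2 : p ≤ 2 * n - 2) :
    ((4 * n + 2 : ℝ) / ((n + 1) * (n + 2))) *
        ((1 / 180) * realBinom (2 * n) p - (1 / 12) * realBinom (2 * n - 2) (p - 1)
          + (1 / 2) * realBinom (2 * n - 4) (p - 2))
      + (1 / 2) *
        (-(1 / 180) * realBinom (2 * n) p + (1 / 2) * realBinom (2 * n - 2) (p - 1)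
          - 2 * realBinom (2 * n - 4) (p - 2))
      + ((1 / 72) * realBinom (2 * n) p - (1 / 6) * realBinom (2 * n - 2) (p - 1)
          + (1 / 2) * realBinom (2 * n - 4) (p - 2)) > 0 := by
  obtain ⟨m, rfl⟩ : ∃ m, n = m + 2 := ⟨n - 2, by omega⟩
  rw [show 2 * (m + 2) = 2 * m + 4 by ring,
      show 2 * m + 4 - 2 = 2 * m + 2 by omega,
      show 2 * m + 4 - 4 = 2 * m by omega]
  set M : ℝ := (m : ℝ) with hMdef
  have hM : 0 ≤ M := Nat.cast_nonneg m
  have hp2' : p ≤ 2 * M + 2 := by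
    have hc : ((m + 2 : ℕ) : ℝ) = M + 2 := by push_cast; ring
    rw [hc] at hp2; linarith
  have h1 : (0:ℝ) < p := by linarith
  have h2 : (0:ℝ) < p - 1 := by linarith
  have h3 : (0:ℝ) < 2 * M + 4 - p := by linarith
  have h4 : (0:ℝ) < 2 * M + 3 - p := by linarith
  have hΓx : 0 < Real.Gamma (p - 1) := Real.Gamma_pos_of_pos (by linarith)
  have hΓy : 0 < Real.Gamma (2 * M + 3 - p) := Real.Gamma_pos_of_pos (by linarith)
  have hg1 : Real.Gamma (p + 1) = p * ((p - 1) * Real.Gamma (p - 1)) := by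
    rw [show p + 1 = (p - 1 + 1) + 1 by ring,
        Real.Gamma_add_one (show (0:ℝ) < p - 1 + 1 by linarith).ne', Real.Gamma_add_one h2.ne']
    ring
  have hg2 : Real.Gamma ((2 * M + 4 : ℝ) - p + 1) =
      (2 * M + 4 - p) * ((2 * M + 3 - p) * Real.Gamma (2 * M + 3 - p)) := by
    rw [show (2 * M + 4 : ℝ) - p + 1 = ((2 * M + 3 - p) + 1) + 1 by ring,
        Real.Gamma_add_one (show (0:ℝ) < 2 * M + 3 - p + 1 by linarith).ne', Real.Gamma_add_one h4.ne']
    ring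
  have hg3 : Real.Gamma (p - 1 + 1) = (p - 1) * Real.Gamma (p - 1) :=
    Real.Gamma_add_one h2.ne'
  have hg4 : Real.Gamma ((2 * M + 2 : ℝ) - (p - 1) + 1) =
      (2 * M + 3 - p) * Real.Gamma (2 * M + 3 - p) := by
    rw [show (2 * M + 2 : ℝ) - (p - 1) + 1 = (2 * M + 3 - p) + 1 by ring,
        Real.Gamma_add_one h4.ne']
  have hg5 : Real.Gamma (p - 2 + 1) = Real.Gamma (p - 1) := by congr 1; ring
  have hg6 : Real.Gamma ((2 * M : ℝ) - (p - 2) + 1) = Real.Gamma (2 * M + 3 - p) := by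
    congr 1; ring
  have hfac4 : ((2 * m + 4).factorial : ℝ) =
      (2 * M + 4) * (2 * M + 3) * (2 * M + 2) * (2 * M + 1) * ((2 * m).factorial : ℝ) := by
    rw [show 2 * m + 4 = (2 * m + 3) + 1 by omega, Nat.factorial_succ,
        show 2 * m + 3 = (2 * m + 2) + 1 by omega, Nat.factorial_succ,
        show 2 * m + 2 = (2 * m + 1) + 1 by omega, Nat.factorial_succ,
        show 2 * m + 1 = (2 * m) + 1 by omega, Nat.factorial_succ]
    push_cast; ring
  have hfac2 : ((2 * m + 2).factorial : ℝ) =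
      (2 * M + 2) * (2 * M + 1) * ((2 * m).factorial : ℝ) := by
    rw [show 2 * m + 2 = (2 * m + 1) + 1 by omega, Nat.factorial_succ,
        show 2 * m + 1 = (2 * m) + 1 by omega, Nat.factorial_succ]
    push_cast; ring
  have hF : (0 : ℝ) < ((2 * m).factorial : ℝ) := by positivity
  have hc4 : ((2 * m + 4 : ℕ) : ℝ) = 2 * M + 4 := by push_cast; ring
  have hc2 : ((2 * m + 2 : ℕ) : ℝ) = 2 * M + 2 := by push_cast; ring
  have hc0 : ((2 * m : ℕ) : ℝ) = 2 * M := by push_cast; ring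
  have hcn : ((m + 2 : ℕ) : ℝ) = M + 2 := by push_cast; ring
  -- express the three binomials
  have hA : realBinom (2 * m + 4) p
      = (((2 * m).factorial : ℝ) / (Real.Gamma (p - 1) * Real.Gamma (2 * M + 3 - p)))
        * ((2*M+4)*(2*M+3)*(2*M+2)*(2*M+1)/(p*(p-1)*(2*M+4-p)*(2*M+3-p))) := by
    simp only [realBinom]
    rw [hc4, hg1, hg2, hfac4]
    field_simp
  have hB : realBinom (2 * m + 2) (p - 1)
      = (((2 * m).factorial : ℝ) / (Real.Gamma (p - 1) * Real.Gamma (2 * M + 3 - p)))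
        * ((2*M+2)*(2*M+1)/((p-1)*(2*M+3-p))) := by
    simp only [realBinom]
    rw [hc2, hg3, hg4, hfac2]
    field_simp
  have hC : realBinom (2 * m) (p - 2)
      = (((2 * m).factorial : ℝ) / (Real.Gamma (p - 1) * Real.Gamma (2 * M + 3 - p)))
        * 1 := by
    simp only [realBinom]
    rw [hc0, hg5, hg6]
    rw [mul_one]
  have hS := S_pos M p hM hp hp2'
  rw [hA, hB, hC, hcn, gt_iff_lt]
  calc (0:ℝ)
      < (((2 * m).factorial : ℝ) / (Real.Gamma (p - 1) * Real.Gamma (2 * M + 3 - p))) *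
        ((4*(M+2)+2)/((M+2+1)*(M+2+2)) *
          ((1/180)*((2*M+4)*(2*M+3)*(2*M+2)*(2*M+1)/(p*(p-1)*(2*M+4-p)*(2*M+3-p)))
            - (1/12)*((2*M+2)*(2*M+1)/((p-1)*(2*M+3-p))) + (1/2)*1)
        + (1/2) *
          (-(1/180)*((2*M+4)*(2*M+3)*(2*M+2)*(2*M+1)/(p*(p-1)*(2*M+4-p)*(2*M+3-p)))
            + (1/2)*((2*M+2)*(2*M+1)/((p-1)*(2*M+3-p))) - 2*1)
        + ((1/72)*((2*M+4)*(2*M+3)*(2*M+2)*(2*M+1)/(p*(p-1)*(2*M+4-p)*(2*M+3-p)))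
            - (1/6)*((2*M+2)*(2*M+1)/((p-1)*(2*M+3-p))) + (1/2)*1)) :=
        mul_pos (div_pos hF (mul_pos hΓx hΓy)) hS
    _ = _ := by ring
end
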